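/- Let C be an irreducible component of a general KCM with infection probability q, and let K = {η}_L^ω be the common closure of the configurations in C. Then under μ_L = π_L(·|C) the family of infection indicators (1_{η_x ∈ I_x})_{x∈K} stochastically dominates a family of i.i.d. Bernoulli(q) random variables: for every function g : {0,1}^K → ℝ that is nondecreasing in each coordinate, the μ_L-expectation of g((1_{η_x ∈ I_x})_{x∈K}) is at least the expectation of g under the product Bernoulli(q) measure on {0,1}^K. -/

import Mathlib

open scoped Classical

namespace KCM

/-- A full configuration assigns a state to every site of `ℤ`.  The boundary
condition is the restriction of a configuration outside the volume. -/
abbrev Config (S : ℤ → Type) : Type := ∀ x : ℤ, S x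

variable {S : ℤ → Type}

/-- The constraint at site `x` is satisfied in configuration `η`: some update
rule of `x` has all its sites infected. -/
def Constraint (I : ∀ x : ℤ, Set (S x)) (U : ℤ → Finset (Finset ℤ)) (x : ℤ)
    (η : Config S) : Prop :=
  ∃ u ∈ U x, ∀ y ∈ u, η y ∈ I y

/-- A legal transition of the KCM on volume `L`: the two configurations agree
off a single site `x ∈ L` whose constraint is satisfied. -/
def Step (I : ∀ x : ℤ, Set (S x)) (U : ℤ → Finset (Finset ℤ)) (L : Finset ℤ)
    (η η' : Config S) : Prop :=
  ∃ x ∈ L, Constraint I U x η ∧ ∀ y : ℤ, y ≠ x → η' y = η y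

/-- `η` and `η'` belong to the same irreducible component of the KCM on volume
`L` (connected component of the transition graph on configurations). -/
def Reach (I : ∀ x : ℤ, Set (S x)) (U : ℤ → Finset (Finset ℤ)) (L : Finset ℤ)
    (η η' : Config S) : Prop :=
  Relation.ReflTransGen (fun ζ ζ' => Step I U L ζ ζ' ∨ Step I U L ζ' ζ) η η'

/-- The closure `{η}_L^ω`: the set of sites of `L` whose state can eventually
be updated starting from `η`. -/
def closure (I : ∀ x : ℤ, Set (S x)) (U : ℤ → Finset (Finset ℤ)) (L : Finset ℤ)
    (η : Config S) : Set ℤ :=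
  {x | x ∈ L ∧ ∃ η', Reach I U L η η' ∧ Constraint I U x η'}

/-- Replace the states of `η` inside `Λ` by `ξ`. -/
def glue (Λ : Finset ℤ) (η : Config S) (ξ : ∀ x : {y : ℤ // y ∈ Λ}, S x.1) :
    Config S :=
  fun x => if h : x ∈ Λ then ξ ⟨x, h⟩ else η x

variable [∀ x, Fintype (S x)]

/-- Expectation of `f` when the states of `η` inside `Λ` are resampled from the
product of the measures `π x`, `x ∈ Λ`, conditioned on the event `P`. -/
noncomputable def expOn (π : ∀ x : ℤ, S x → ℝ) (Λ : Finset ℤ)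
    (P : Config S → Prop) (η : Config S) (f : Config S → ℝ) : ℝ :=
  (∑ ξ : ∀ x : {y : ℤ // y ∈ Λ}, S x.1,
      if P (glue Λ η ξ) then (∏ x : {y : ℤ // y ∈ Λ}, π x.1 (ξ x)) * f (glue Λ η ξ) else 0) /
  (∑ ξ : ∀ x : {y : ℤ // y ∈ Λ}, S x.1,
      if P (glue Λ η ξ) then (∏ x : {y : ℤ // y ∈ Λ}, π x.1 (ξ x)) else 0)

/-- Variance of `f` when the states of `η` inside `Λ` are resampled from the
product of the measures `π x`, `x ∈ Λ`, conditioned on the event `P`. -/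
noncomputable def varOn (π : ∀ x : ℤ, S x → ℝ) (Λ : Finset ℤ)
    (P : Config S → Prop) (η : Config S) (f : Config S → ℝ) : ℝ :=
  expOn π Λ P η (fun ζ => (f ζ - expOn π Λ P η f) ^ 2)



set_option linter.unusedSectionVars false
set_option maxHeartbeats 1000000

section Graph
variable (I : ∀ x : ℤ, Set (S x)) (U : ℤ → Finset (Finset ℤ)) (L : Finset ℤ)

variable (I : ∀ x : ℤ, Set (S x)) (U : ℤ → Finset (Finset ℤ)) (L : Finset ℤ)

lemma constraint_update {x y : ℤ} {s' : S x} (hs' : s' ∈ I x) {η : Config S}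
    (h : Constraint I U y η) : Constraint I U y (Function.update η x s') := by
  obtain ⟨u, hu, hall⟩ := h
  refine ⟨u, hu, fun w hw => ?_⟩
  by_cases hwx : w = x
  · subst hwx; rw [Function.update_self]; exact hs'
  · rw [Function.update_of_ne hwx]; exact hall w hw

lemma constraint_congr {x : ℤ} (hxu : ∀ u ∈ U x, x ∉ u) {η η' : Config S}
    (hagree : ∀ y, y ≠ x → η' y = η y) (h : Constraint I U x η') : Constraint I U x η := by
  obtain ⟨u, hu, hall⟩ := h
  refine ⟨u, hu, fun w hw => ?_⟩
  have hwx : w ≠ x := fun e => hxu u hu (e ▸ hw)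
  rw [← hagree w hwx]; exact hall w hw

lemma reach_update {x : ℤ} (hxL : x ∈ L) (hxu : ∀ u ∈ U x, x ∉ u)
    {s' : S x} (hs' : s' ∈ I x) {η η'' : Config S}
    (hre : Reach I U L η η'') (hc : Constraint I U x η'') :
    Reach I U L η (Function.update η x s') := by
  unfold Reach at *
  induction hre using Relation.ReflTransGen.head_induction_on with
  | refl =>
      exact Relation.ReflTransGen.single
        (Or.inl ⟨x, hxL, hc, fun y hy => Function.update_of_ne hy _ _⟩)
  | head hac hcb ih =>
      rename_i a c
      obtain ⟨y, hyL, hycon, hagr⟩ :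
          ∃ y ∈ L, (Constraint I U y a ∨ Constraint I U y c) ∧ ∀ w, w ≠ y → c w = a w := by
        rcases hac with ⟨y, hyL, hcon, hagr⟩ | ⟨y, hyL, hcon, hagr⟩
        · exact ⟨y, hyL, Or.inl hcon, hagr⟩
        · exact ⟨y, hyL, Or.inr hcon, fun w hw => (hagr w hw).symm⟩
      by_cases hyx : y = x
      · subst hyx
        have hca : Constraint I U y a := by
          rcases hycon with h | h
          · exact h
          · exact constraint_congr I U hxu hagr h
        exact Relation.ReflTransGen.single
          (Or.inl ⟨y, hyL, hca, fun w hw => Function.update_of_ne hw _ _⟩)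
      · have hagr' : ∀ w, w ≠ y → Function.update c x s' w = Function.update a x s' w := by
          intro w hw
          by_cases hwx : w = x
          · subst hwx; rw [Function.update_self, Function.update_self]
          · rw [Function.update_of_ne hwx, Function.update_of_ne hwx]; exact hagr w hw
        have hstep : Step I U L (Function.update a x s') (Function.update c x s') ∨
            Step I U L (Function.update c x s') (Function.update a x s') := by
          rcases hycon with h | h
          · exact Or.inl ⟨y, hyL, constraint_update I U hs' h, hagr'⟩
          · refine Or.inr ⟨y, hyL, constraint_update I U hs' h, fun w hw => (hagr' w hw).symm⟩
        exact Relation.ReflTransGen.tail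
          (Relation.ReflTransGen.head
            (r := fun ζ ζ' => Step I U L ζ ζ' ∨ Step I U L ζ' ζ) hac ih) hstep.symm

lemma reach_symm {η η' : Config S} (h : Reach I U L η η') : Reach I U L η' η :=
  by
    unfold Reach at *
    induction h with
    | refl => exact Relation.ReflTransGen.refl
    | tail _ hbc ih => exact Relation.ReflTransGen.head hbc.symm ih

lemma reach_update_of_closure {η₀ : Config S} {x : ℤ} (hxL : x ∈ L)
    (hxu : ∀ u ∈ U x, x ∉ u) (hx : x ∈ closure I U L η₀) {s' : S x} (hs' : s' ∈ I x)
    {η : Config S} (hη : Reach I U L η₀ η) :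
    Reach I U L η₀ (Function.update η x s') := by
  obtain ⟨-, η', hre', hc⟩ := hx
  have h1 : Reach I U L η η' :=
    Relation.ReflTransGen.trans (reach_symm I U L hη) hre'
  exact Relation.ReflTransGen.trans hη (reach_update I U L hxL hxu hs' h1 hc)


lemma glue_update (η₀ : Config S) {x : ℤ} (hxL : x ∈ L)
    (ξ : ∀ v : {y : ℤ // y ∈ L}, S v.1) (s' : S x) :
    glue L η₀ (Function.update ξ ⟨x, hxL⟩ s') = Function.update (glue L η₀ ξ) x s' := by
  funext y
  by_cases hy : y = x
  · subst hy
    rw [Function.update_self]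
    show (if h : y ∈ L then Function.update ξ ⟨y, hxL⟩ s' ⟨y, h⟩ else η₀ y) = s'
    rw [dif_pos hxL]
    exact Function.update_self _ _ _
  · rw [Function.update_of_ne hy]
    show (if h : y ∈ L then Function.update ξ ⟨x, hxL⟩ s' ⟨y, h⟩ else η₀ y)
        = glue L η₀ ξ y
    by_cases hyL : y ∈ L
    · rw [dif_pos hyL,
        Function.update_of_ne (fun e => hy (congrArg Subtype.val e))]
      show ξ ⟨y, hyL⟩ = glue L η₀ ξ y
      simp [glue, hyL]
    · simp [glue, hyL]

end Graph

section Bern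

variable {κ : Type*} [DecidableEq κ]

/-- Resample coordinate `z` by a Bernoulli(q) variable. -/
noncomputable def Tz (q : ℝ) (z : κ) (h : (κ → Bool) → ℝ) : (κ → Bool) → ℝ :=
  fun a => q * h (Function.update a z true) + (1 - q) * h (Function.update a z false)

/-- Resample the coordinates in `l` successively. -/
noncomputable def smoothL (q : ℝ) (l : List κ) (h : (κ → Bool) → ℝ) : (κ → Bool) → ℝ :=
  l.foldr (Tz q) h

def MonoB (h : (κ → Bool) → ℝ) : Prop :=
  ∀ a b, (∀ z, a z = true → b z = true) → h a ≤ h b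

lemma update_le_update {a b : κ → Bool} (hab : ∀ z, a z = true → b z = true) (z : κ) (v : Bool) :
    ∀ w, Function.update a z v w = true → Function.update b z v w = true := by
  intro w hw
  by_cases hwz : w = z
  · subst hwz; rwa [Function.update_self] at hw ⊢
  · rw [Function.update_of_ne hwz] at hw ⊢; exact hab w hw

lemma Tz_mono' {q : ℝ} (hq0 : 0 ≤ q) (hq1 : q ≤ 1) (z : κ) {h : (κ → Bool) → ℝ}
    (hm : MonoB h) : MonoB (Tz q z h) := by
  intro a b hab
  have h1 := hm _ _ (update_le_update hab z true)
  have h2 := hm _ _ (update_le_update hab z false)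
  have hq1' : (0:ℝ) ≤ 1 - q := by linarith
  exact add_le_add (mul_le_mul_of_nonneg_left h1 hq0) (mul_le_mul_of_nonneg_left h2 hq1')

lemma smoothL_mono {q : ℝ} (hq0 : 0 ≤ q) (hq1 : q ≤ 1) (l : List κ) {h : (κ → Bool) → ℝ}
    (hm : MonoB h) : MonoB (smoothL q l h) := by
  induction l with
  | nil => exact hm
  | cons z l ih => exact Tz_mono' hq0 hq1 z ih

variable [Fintype κ]

lemma smoothL_eq (q : ℝ) (g : (κ → Bool) → ℝ) :
    ∀ (l : List κ), l.Nodup → ∀ a, smoothL q l g a =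
      ∑ b : κ → Bool, (∏ z : κ, if z ∈ l then (if b z = true then q else 1 - q)
        else (if b z = a z then 1 else 0)) * g b := by
  intro l
  induction l with
  | nil =>
      intro _ a
      simp only [smoothL, List.foldr_nil, List.not_mem_nil, if_false]
      rw [Finset.sum_eq_single a]
      · simp
      · intro b _ hba
        have hex : ∃ z, b z ≠ a z := by
          by_contra hc; push_neg at hc; exact hba (funext hc)
        obtain ⟨z, hz⟩ := hex
        rw [Finset.prod_eq_zero (Finset.mem_univ z) (by simp [hz]), zero_mul]
      · intro h; exact absurd (Finset.mem_univ a) h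
  | cons z l ih =>
      intro hnd a
      have hzl : z ∉ l := (List.nodup_cons.mp hnd).1
      have hndl : l.Nodup := (List.nodup_cons.mp hnd).2
      show Tz q z (smoothL q l g) a = _
      unfold Tz
      rw [ih hndl, ih hndl, Finset.mul_sum, Finset.mul_sum, ← Finset.sum_add_distrib]
      refine Finset.sum_congr rfl fun b _ => ?_
      have key : q * (∏ w : κ, if w ∈ l then (if b w = true then q else 1 - q)
            else (if b w = Function.update a z true w then 1 else 0)) +
          (1 - q) * (∏ w : κ, if w ∈ l then (if b w = true then q else 1 - q)
            else (if b w = Function.update a z false w then 1 else 0)) =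
          ∏ w : κ, if w ∈ z :: l then (if b w = true then q else 1 - q)
            else (if b w = a w then 1 else 0) := by
        rw [← Finset.mul_prod_erase Finset.univ _ (Finset.mem_univ z),
            ← Finset.mul_prod_erase Finset.univ _ (Finset.mem_univ z),
            ← Finset.mul_prod_erase Finset.univ _ (Finset.mem_univ z)]
        have e1 : ∀ v : Bool, (∏ w ∈ Finset.univ.erase z, if w ∈ l then (if b w = true then q else 1 - q)
            else (if b w = Function.update a z v w then 1 else 0)) =
            ∏ w ∈ Finset.univ.erase z, if w ∈ l then (if b w = true then q else 1 - q)
            else (if b w = a w then 1 else 0) := by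
          intro v
          refine Finset.prod_congr rfl fun w hw => ?_
          have hwz : w ≠ z := (Finset.mem_erase.mp hw).1
          rw [Function.update_of_ne hwz]
        have e2 : (∏ w ∈ Finset.univ.erase z, if w ∈ z :: l then (if b w = true then q else 1 - q)
            else (if b w = a w then 1 else 0)) =
            ∏ w ∈ Finset.univ.erase z, if w ∈ l then (if b w = true then q else 1 - q)
            else (if b w = a w then 1 else 0) := by
          refine Finset.prod_congr rfl fun w hw => ?_
          have hwz : w ≠ z := (Finset.mem_erase.mp hw).1
          simp [List.mem_cons, hwz]
        rw [e1, e1, e2]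
        have hz1 : ((if z ∈ l then (if b z = true then q else 1 - q)
            else (if b z = Function.update a z true z then 1 else 0)) : ℝ)
            = (if b z = true then 1 else 0) := by
          rw [if_neg hzl, Function.update_self]
        have hz2 : ((if z ∈ l then (if b z = true then q else 1 - q)
            else (if b z = Function.update a z false z then 1 else 0)) : ℝ)
            = (if b z = false then 1 else 0) := by
          rw [if_neg hzl, Function.update_self]
        have hz3 : ((if z ∈ z :: l then (if b z = true then q else 1 - q)
            else (if b z = a z then 1 else 0)) : ℝ) = (if b z = true then q else 1 - q) := by
          rw [if_pos (List.mem_cons_self (a := z) (l := l))]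
        rw [hz1, hz2, hz3]
        cases hbz : b z <;> simp
      rw [← key]; ring


lemma smoothL_univ {κ : Type*} [DecidableEq κ] [Fintype κ] (q : ℝ)
    (g : (κ → Bool) → ℝ) (a : κ → Bool) :
    smoothL q Finset.univ.toList g a =
      ∑ b : κ → Bool, (∏ z : κ, if b z = true then q else 1 - q) * g b := by
  rw [smoothL_eq q g _ Finset.univ.nodup_toList a]
  refine Finset.sum_congr rfl fun b _ => ?_
  congr 1
  refine Finset.prod_congr rfl fun z _ => ?_
  rw [if_pos (Finset.mem_toList.mpr (Finset.mem_univ z))]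

end Bern

section Main
variable (I : ∀ x : ℤ, Set (S x)) (U : ℤ → Finset (Finset ℤ)) (L : Finset ℤ)
  (η₀ : Config S) (π : ∀ x : ℤ, S x → ℝ) (q : ℝ) (K : Finset ℤ)

/-- The infection pattern of `glue L η₀ ξ` on `K`. -/
noncomputable def sg (ξ : ∀ v : {y : ℤ // y ∈ L}, S v.1) : {y : ℤ // y ∈ K} → Bool :=
  fun z => if glue L η₀ ξ z.1 ∈ I z.1 then true else false

lemma core_step
    (hq0 : 0 < q) (hq1 : q ≤ 1)
    (hπpos : ∀ (x : ℤ) (s : S x), 0 < π x s)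
    (hπsum : ∀ x : ℤ, ∑ s : S x, π x s = 1)
    (hπI : ∀ x : ℤ, q ≤ ∑ s : S x, if s ∈ I x then π x s else 0)
    (hUx : ∀ x ∈ L, ∀ u ∈ U x, x ∉ u)
    (hK : K = L.filter fun x => x ∈ closure I U L η₀)
    (z : {y : ℤ // y ∈ K}) (h : ({y : ℤ // y ∈ K} → Bool) → ℝ) (hm : MonoB h) :
    (∑ ξ : ∀ v : {y : ℤ // y ∈ L}, S v.1,
        if Reach I U L η₀ (glue L η₀ ξ) then
          (∏ v : {y : ℤ // y ∈ L}, π v.1 (ξ v)) * Tz q z h (sg I L η₀ K ξ) else 0) ≤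
      ∑ ξ : ∀ v : {y : ℤ // y ∈ L}, S v.1,
        if Reach I U L η₀ (glue L η₀ ξ) then
          (∏ v : {y : ℤ // y ∈ L}, π v.1 (ξ v)) * h (sg I L η₀ K ξ) else 0 := by
  obtain ⟨x, hxK⟩ := z
  have hxmem := Finset.mem_filter.mp (hK ▸ hxK)
  have hxL : x ∈ L := hxmem.1
  have hxclo : x ∈ closure I U L η₀ := hxmem.2
  have hxu : ∀ u ∈ U x, x ∉ u := hUx x hxL
  set x₀ : {y : ℤ // y ∈ L} := ⟨x, hxL⟩ with hx₀
  set e := Equiv.piSplitAt x₀ (fun v : {y : ℤ // y ∈ L} => S v.1) with he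
  -- an infected state at x
  have hIne : ∃ s : S x, s ∈ I x := by
    by_contra hc
    push_neg at hc
    have h0 : (∑ s : S x, if s ∈ I x then π x s else 0) = 0 :=
      Finset.sum_eq_zero fun s _ => if_neg (hc s)
    have := hπI x
    rw [h0] at this
    linarith
  obtain ⟨s₁, hs₁⟩ := hIne
  -- splitting the configuration at x₀
  have comb_fst : ∀ (s : S x) ρ, e.symm (s, ρ) x₀ = s := by
    intro s ρ
    exact congrArg Prod.fst (e.apply_symm_apply (s, ρ))
  have comb_ne : ∀ (s : S x) ρ (v : {y : ℤ // y ∈ L}) (hv : v ≠ x₀),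
      e.symm (s, ρ) v = ρ ⟨v, hv⟩ := by
    intro s ρ v hv
    exact congrFun (congrArg Prod.snd (e.apply_symm_apply (s, ρ))) ⟨v, hv⟩
  have comb_update : ∀ (s s' : S x) ρ,
      e.symm (s', ρ) = Function.update (e.symm (s, ρ)) x₀ s' := by
    intro s s' ρ
    funext v
    by_cases hv : v = x₀
    · rw [hv, Function.update_self]
      exact comb_fst s' ρ
    · rw [Function.update_of_ne hv, comb_ne s ρ v hv, comb_ne s' ρ v hv]
  have reindex : ∀ F : (∀ v : {y : ℤ // y ∈ L}, S v.1) → ℝ,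
      ∑ ξ, F ξ = ∑ ρ, ∑ s, F (e.symm (s, ρ)) := by
    intro F
    rw [← Equiv.sum_comp e.symm F, Fintype.sum_prod_type]
    exact Finset.sum_comm
  rw [reindex, reindex]
  refine Finset.sum_le_sum fun ρ _ => ?_
  -- per fixed rest ρ
  have hglue : ∀ s : S x, glue L η₀ (e.symm (s, ρ)) =
      Function.update (glue L η₀ (e.symm (s₁, ρ))) x s := by
    intro s
    rw [comb_update s₁ s ρ]
    exact glue_update L η₀ hxL _ s
  set base := sg I L η₀ K (e.symm (s₁, ρ)) with hbase
  set pt := Function.update base ⟨x, hxK⟩ true with hpt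
  set pf := Function.update base ⟨x, hxK⟩ false with hpf
  have hbase_ne : ∀ (s : S x) (z' : {y : ℤ // y ∈ K}) (_ : z' ≠ ⟨x, hxK⟩),
      sg I L η₀ K (e.symm (s, ρ)) z' = base z' := by
    intro s z' hz'
    have hne : z'.1 ≠ x := fun hh => hz' (Subtype.ext hh)
    show (if glue L η₀ (e.symm (s, ρ)) z'.1 ∈ I z'.1 then true else false) = base z'
    rw [hglue s, Function.update_of_ne hne]
    rfl
  have hsg : ∀ s : S x, sg I L η₀ K (e.symm (s, ρ)) = if s ∈ I x then pt else pf := by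
    intro s
    funext z'
    by_cases hz' : z' = ⟨x, hxK⟩
    · rw [hz']
      have h1 : sg I L η₀ K (e.symm (s, ρ)) ⟨x, hxK⟩ = (if s ∈ I x then true else false) := by
        show (if glue L η₀ (e.symm (s, ρ)) x ∈ I x then true else false) = _
        rw [hglue s, Function.update_self]
      rw [h1]
      by_cases hsI : s ∈ I x
      · rw [if_pos hsI, if_pos hsI, hpt, Function.update_self]
      · rw [if_neg hsI, if_neg hsI, hpf, Function.update_self]
    · rw [hbase_ne s z' hz']
      by_cases hsI : s ∈ I x
      · rw [if_pos hsI, hpt, Function.update_of_ne hz']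
      · rw [if_neg hsI, hpf, Function.update_of_ne hz']
  have hTz : ∀ s : S x, Tz q ⟨x, hxK⟩ h (sg I L η₀ K (e.symm (s, ρ)))
      = q * h pt + (1 - q) * h pf := by
    intro s
    have hu : ∀ b : Bool, Function.update (sg I L η₀ K (e.symm (s, ρ))) ⟨x, hxK⟩ b
        = Function.update base ⟨x, hxK⟩ b := by
      intro b
      funext z'
      by_cases hz' : z' = ⟨x, hxK⟩
      · rw [hz', Function.update_self, Function.update_self]
      · rw [Function.update_of_ne hz', Function.update_of_ne hz', hbase_ne s z' hz']
    show q * h (Function.update (sg I L η₀ K (e.symm (s, ρ))) ⟨x, hxK⟩ true) +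
        (1 - q) * h (Function.update (sg I L η₀ K (e.symm (s, ρ))) ⟨x, hxK⟩ false) = _
    rw [hu true, hu false]
  have hDq : h pf ≤ h pt := by
    refine hm pf pt fun w hw => ?_
    by_cases hwz : w = ⟨x, hxK⟩
    · rw [hwz, hpf, Function.update_self] at hw
      exact absurd hw (by simp)
    · rw [hpt, Function.update_of_ne hwz]
      rw [hpf, Function.update_of_ne hwz] at hw
      exact hw
  have hwt : ∀ s : S x, (∏ v : {y : ℤ // y ∈ L}, π v.1 (e.symm (s, ρ) v)) =
      π x s * ∏ v ∈ Finset.univ.erase x₀, π v.1 (e.symm (s₁, ρ) v) := by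
    intro s
    rw [← Finset.mul_prod_erase Finset.univ _ (Finset.mem_univ x₀)]
    congr 1
    · rw [comb_fst]
    · refine Finset.prod_congr rfl fun v hv => ?_
      have hvx : v ≠ x₀ := (Finset.mem_erase.mp hv).1
      rw [comb_ne s ρ v hvx, comb_ne s₁ ρ v hvx]
  have hC : ∀ s s' : S x, s' ∈ I x → Reach I U L η₀ (glue L η₀ (e.symm (s, ρ))) →
      Reach I U L η₀ (glue L η₀ (e.symm (s', ρ))) := by
    intro s s' hs' hre
    rw [comb_update s s' ρ, glue_update L η₀ hxL _ s']
    exact reach_update_of_closure I U L hxL hxu hxclo hs' hre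
  by_cases hall : ∀ s : S x, ¬ Reach I U L η₀ (glue L η₀ (e.symm (s, ρ)))
  · refine le_of_eq ?_
    rw [Finset.sum_eq_zero fun s _ => if_neg (hall s),
      Finset.sum_eq_zero fun s _ => if_neg (hall s)]
  · push_neg at hall
    obtain ⟨sw, hsw⟩ := hall
    have hCI : ∀ s' ∈ I x, Reach I U L η₀ (glue L η₀ (e.symm (s', ρ))) :=
      fun s' hs' => hC sw s' hs' hsw
    rw [← sub_nonneg, ← Finset.sum_sub_distrib]
    set W := ∏ v ∈ Finset.univ.erase x₀, π v.1 (e.symm (s₁, ρ) v) with hW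
    have hW0 : 0 ≤ W := Finset.prod_nonneg fun v _ => (hπpos v.1 _).le
    have hD0 : 0 ≤ h pt - h pf := sub_nonneg.mpr hDq
    have hterm : ∀ s : S x,
        (W * (h pt - h pf)) * ((if s ∈ I x then π x s else 0) - q * π x s) ≤
        ((if Reach I U L η₀ (glue L η₀ (e.symm (s, ρ))) then
            (∏ v : {y : ℤ // y ∈ L}, π v.1 (e.symm (s, ρ) v)) *
              h (sg I L η₀ K (e.symm (s, ρ))) else 0) -
          (if Reach I U L η₀ (glue L η₀ (e.symm (s, ρ))) then
            (∏ v : {y : ℤ // y ∈ L}, π v.1 (e.symm (s, ρ) v)) *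
              Tz q ⟨x, hxK⟩ h (sg I L η₀ K (e.symm (s, ρ))) else 0)) := by
      intro s
      rw [hTz s, hsg s, hwt s]
      by_cases hsI : s ∈ I x
      · rw [if_pos hsI, if_pos hsI, if_pos (hCI s hsI), if_pos (hCI s hsI)]
        exact le_of_eq (by ring)
      · rw [if_neg hsI, if_neg hsI]
        by_cases hCs : Reach I U L η₀ (glue L η₀ (e.symm (s, ρ)))
        · rw [if_pos hCs, if_pos hCs]
          exact le_of_eq (by ring)
        · rw [if_neg hCs, if_neg hCs]
          nlinarith [mul_nonneg (mul_nonneg hW0 hD0) (mul_nonneg hq0.le (hπpos x s).le)]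
    refine le_trans ?_ (Finset.sum_le_sum fun s _ => hterm s)
    rw [← Finset.mul_sum, Finset.sum_sub_distrib, ← Finset.mul_sum, hπsum x]
    have h2 : 0 ≤ (∑ s : S x, if s ∈ I x then π x s else 0) - q * 1 := by
      have := hπI x
      linarith
    exact mul_nonneg (mul_nonneg hW0 hD0) h2

end Main

/-- Under `μ_L = π_L(·|C)` the infection indicators on the
closure `K` stochastically dominate i.i.d. Bernoulli(q) variables: for every
coordinatewise nondecreasing `g : {0,1}^K → ℝ`, the `μ_L`-mean of
`g((1_{η x ∈ I x})_{x ∈ K})` is at least the Bernoulli(q) product mean of `g`. -/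
theorem statement5 (S : ℤ → Type) [∀ x, Fintype (S x)] (L : Finset ℤ)
    (q R : ℝ)
    (hq0 : 0 < q) (hq1 : q ≤ 1) (hR : 1 ≤ R)
    (π : ∀ x : ℤ, S x → ℝ) (I : ∀ x : ℤ, Set (S x)) (U : ℤ → Finset (Finset ℤ))
    (hπpos : ∀ (x : ℤ) (s : S x), 0 < π x s)
    (hπsum : ∀ x : ℤ, ∑ s : S x, π x s = 1)
    (hπI : ∀ x : ℤ, q ≤ ∑ s : S x, if s ∈ I x then π x s else 0)
    (hUx : ∀ x ∈ L, ∀ u ∈ U x, x ∉ u)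
    (hUR : ∀ x ∈ L, ∀ u ∈ U x, ∀ y ∈ u, ((|y - x| : ℤ) : ℝ) ≤ R)
    (η₀ : Config S)
    (K : Finset ℤ) (hK : K = L.filter fun x => x ∈ closure I U L η₀)
    (g : ({y : ℤ // y ∈ K} → Bool) → ℝ)
    (hg : ∀ a b : {y : ℤ // y ∈ K} → Bool,
      (∀ z, a z = true → b z = true) → g a ≤ g b) :
    (∑ a : {y : ℤ // y ∈ K} → Bool,
        (∏ z : {y : ℤ // y ∈ K}, if a z = true then q else 1 - q) * g a) ≤
      expOn π L (Reach I U L η₀) η₀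
        (fun η => g (fun z => if η z.1 ∈ I z.1 then true else false)) := by
  classical
  have hglue0 : glue L η₀ (fun v : {y : ℤ // y ∈ L} => η₀ v.1) = η₀ := by
    funext y
    by_cases hy : y ∈ L <;> simp [glue, hy]
  have hterm0 : ∀ ξ : ∀ v : {y : ℤ // y ∈ L}, S v.1,
      0 ≤ (if Reach I U L η₀ (glue L η₀ ξ) then
        (∏ v : {y : ℤ // y ∈ L}, π v.1 (ξ v)) else 0) := by
    intro ξ
    split
    · exact Finset.prod_nonneg fun v _ => (hπpos _ _).le
    · exact le_refl 0
  have hZpos : 0 < ∑ ξ : ∀ v : {y : ℤ // y ∈ L}, S v.1,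
      if Reach I U L η₀ (glue L η₀ ξ) then
        (∏ v : {y : ℤ // y ∈ L}, π v.1 (ξ v)) else 0 := by
    have h2 : (0:ℝ) < (if Reach I U L η₀ (glue L η₀ (fun v : {y : ℤ // y ∈ L} => η₀ v.1)) then
        (∏ v : {y : ℤ // y ∈ L}, π v.1 (η₀ v.1)) else 0) := by
      rw [hglue0, if_pos (show Reach I U L η₀ η₀ from Relation.ReflTransGen.refl)]
      exact Finset.prod_pos fun v _ => hπpos _ _
    exact lt_of_lt_of_le h2 (Finset.single_le_sum (fun ξ _ => hterm0 ξ) (Finset.mem_univ _))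
  unfold expOn
  rw [le_div_iff₀ hZpos]
  have hmono_g : MonoB g := hg
  have step : ∀ l : List {y : ℤ // y ∈ K},
      (∑ ξ : ∀ v : {y : ℤ // y ∈ L}, S v.1,
        if Reach I U L η₀ (glue L η₀ ξ) then
          (∏ v : {y : ℤ // y ∈ L}, π v.1 (ξ v)) * smoothL q l g (sg I L η₀ K ξ) else 0) ≤
      ∑ ξ : ∀ v : {y : ℤ // y ∈ L}, S v.1,
        if Reach I U L η₀ (glue L η₀ ξ) then
          (∏ v : {y : ℤ // y ∈ L}, π v.1 (ξ v)) * g (sg I L η₀ K ξ) else 0 := by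
    intro l
    induction l with
    | nil => exact le_refl _
    | cons z l ih =>
        refine le_trans ?_ ih
        exact core_step I U L η₀ π q K hq0 hq1 hπpos hπsum hπI hUx hK z
          (smoothL q l g) (smoothL_mono hq0.le hq1 l hmono_g)
  have hfin := step Finset.univ.toList
  have heq : (∑ ξ : ∀ v : {y : ℤ // y ∈ L}, S v.1,
      if Reach I U L η₀ (glue L η₀ ξ) then
        (∏ v : {y : ℤ // y ∈ L}, π v.1 (ξ v)) *
          smoothL q Finset.univ.toList g (sg I L η₀ K ξ) else 0) =
      (∑ a : {y : ℤ // y ∈ K} → Bool,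
        (∏ z : {y : ℤ // y ∈ K}, if a z = true then q else 1 - q) * g a) *
      ∑ ξ : ∀ v : {y : ℤ // y ∈ L}, S v.1,
        if Reach I U L η₀ (glue L η₀ ξ) then
          (∏ v : {y : ℤ // y ∈ L}, π v.1 (ξ v)) else 0 := by
    rw [Finset.mul_sum]
    refine Finset.sum_congr rfl fun ξ _ => ?_
    rw [smoothL_univ]
    split
    · ring
    · ring
  rw [heq] at hfin
  exact hfin


end KCM
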